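/- For every integer m ≥ 0, every real k, and every nonzero complex λ, the function u(x,y) = Re[∂ᵐ/∂λᵐ exp(i(k/2)(λz + z̄/λ))], where z = x + iy, satisfies the Helmholtz equation −Δu = k²u on ℝ². -/

import Mathlib

noncomputable def pdx (f : ℝ → ℝ → ℝ) : ℝ → ℝ → ℝ := fun x y => deriv (fun t => f t y) x
noncomputable def pdy (f : ℝ → ℝ → ℝ) : ℝ → ℝ → ℝ := fun x y => deriv (fun t => f x t) y
noncomputable def lap (f : ℝ → ℝ → ℝ) : ℝ → ℝ → ℝ :=
  fun x y => pdx (pdx f) x y + pdy (pdy f) x y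

/-- The function u(x,y) = Re[∂ᵐ/∂λᵐ exp(i(k/2)(λz + z̄/λ))], z = x+iy. -/
noncomputable def uFun (m : ℕ) (k : ℝ) (lam : ℂ) (x y : ℝ) : ℝ :=
  (iteratedDeriv m
    (fun l : ℂ => Complex.exp (Complex.I * (k / 2) *
      (l * (x + y * Complex.I) + (x - y * Complex.I) / l))) lam).re

open Complex Set

namespace HelmAux

abbrev EE := ℂ × ℂ × ℂ

def U : Set EE := {p | p.2.2 ≠ 0}

lemma hUopen : IsOpen U := isOpen_ne.preimage (continuous_snd.snd)

/-- directional partial derivative -/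
noncomputable def pd (v : EE) (F : EE → ℂ) : EE → ℂ := fun p => fderiv ℂ F p v

/-- iterated derivative in the third variable -/
noncomputable def itF (m : ℕ) (F : EE → ℂ) : EE → ℂ :=
  fun p => iteratedDeriv m (fun t => F (p.1, p.2.1, t)) p.2.2

lemma smooth_pd {F : EE → ℂ} (hF : ContDiffOn ℂ ⊤ F U) (v : EE) :
    ContDiffOn ℂ ⊤ (pd v F) U :=
  (hF.fderiv_of_isOpen hUopen le_top).clm_apply contDiffOn_const

lemma diffAt {F : EE → ℂ} (hF : ContDiffOn ℂ ⊤ F U) {p : EE} (hp : p ∈ U) :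
    DifferentiableAt ℂ F p :=
  ((hF.differentiableOn (by simp)).differentiableAt (hUopen.mem_nhds hp))

lemma hasDerivAt_slice3 {F : EE → ℂ} {p : EE} (hF : DifferentiableAt ℂ F p) :
    HasDerivAt (fun t => F (p.1, p.2.1, t)) (pd (0, 0, 1) F p) p.2.2 := by
  have hc : HasDerivAt (fun t : ℂ => ((p.1 : ℂ), (p.2.1, t))) ((0 : ℂ), ((0 : ℂ), (1 : ℂ))) p.2.2 :=
    (hasDerivAt_const _ _).prodMk ((hasDerivAt_const _ _).prodMk (hasDerivAt_id _))
  exact hF.hasFDerivAt.comp_hasDerivAt p.2.2 hc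

lemma hasDerivAt_slice1 {F : EE → ℂ} {p : EE} (hF : DifferentiableAt ℂ F p) :
    HasDerivAt (fun s => F (s, p.2.1, p.2.2)) (pd (1, 0, 0) F p) p.1 := by
  have hc : HasDerivAt (fun s : ℂ => (s, (p.2.1, p.2.2))) ((1 : ℂ), ((0 : ℂ), (0 : ℂ))) p.1 :=
    (hasDerivAt_id _).prodMk ((hasDerivAt_const _ _).prodMk (hasDerivAt_const _ _))
  exact hF.hasFDerivAt.comp_hasDerivAt p.1 hc

lemma hasDerivAt_slice2 {F : EE → ℂ} {p : EE} (hF : DifferentiableAt ℂ F p) :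
    HasDerivAt (fun w => F (p.1, w, p.2.2)) (pd (0, 1, 0) F p) p.2.1 := by
  have hc : HasDerivAt (fun w : ℂ => ((p.1 : ℂ), (w, p.2.2))) ((0 : ℂ), ((1 : ℂ), (0 : ℂ))) p.2.1 :=
    (hasDerivAt_const _ _).prodMk ((hasDerivAt_id _).prodMk (hasDerivAt_const _ _))
  exact hF.hasFDerivAt.comp_hasDerivAt p.2.1 hc

lemma itF_zero (F : EE → ℂ) : itF 0 F = F := by
  funext p; simp [itF]

lemma fderiv_congrU {F G : EE → ℂ} (h : EqOn F G U) {p : EE} (hp : p ∈ U) :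
    fderiv ℂ F p = fderiv ℂ G p :=
  Filter.EventuallyEq.fderiv_eq (Filter.eventuallyEq_of_mem (hUopen.mem_nhds hp) h)

lemma pd_congrU {F G : EE → ℂ} (h : EqOn F G U) (v : EE) {p : EE} (hp : p ∈ U) :
    pd v F p = pd v G p := by
  show fderiv ℂ F p v = fderiv ℂ G p v
  rw [fderiv_congrU h hp]

lemma smooth_itF {F : EE → ℂ} (hF : ContDiffOn ℂ ⊤ F U) (m : ℕ) :
    ContDiffOn ℂ ⊤ (itF m F) U := by
  induction m with
  | zero => rw [itF_zero]; exact hF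
  | succ m ih =>
    refine (smooth_pd ih (0, 0, 1)).congr (fun p hp => ?_)
    have hdiff : DifferentiableAt ℂ (itF m F) p := diffAt ih hp
    show iteratedDeriv (m + 1) (fun t => F (p.1, p.2.1, t)) p.2.2 = _
    rw [iteratedDeriv_succ]
    exact (hasDerivAt_slice3 hdiff).deriv

lemma itF_succ {F : EE → ℂ} (hF : ContDiffOn ℂ ⊤ F U) (m : ℕ) {p : EE} (hp : p ∈ U) :
    itF (m + 1) F p = pd (0, 0, 1) (itF m F) p := by
  have hdiff : DifferentiableAt ℂ (itF m F) p := diffAt (smooth_itF hF m) hp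
  show iteratedDeriv (m + 1) (fun t => F (p.1, p.2.1, t)) p.2.2 = _
  rw [iteratedDeriv_succ]
  exact (hasDerivAt_slice3 hdiff).deriv

lemma pd_comm {H : EE → ℂ} (hH : ContDiffOn ℂ ⊤ H U) (v w : EE) {p : EE} (hp : p ∈ U) :
    pd v (pd w H) p = pd w (pd v H) p := by
  have hsymm : IsSymmSndFDerivAt ℂ H p :=
    (hH.contDiffAt (hUopen.mem_nhds hp)).isSymmSndFDerivAt le_top
  have hdf : DifferentiableAt ℂ (fderiv ℂ H) p :=
    (((hH.fderiv_of_isOpen (m := 1) hUopen le_top).differentiableOn (by simp)).differentiableAt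
      (hUopen.mem_nhds hp))
  have key : ∀ a b : EE, pd a (pd b H) p = fderiv ℂ (fderiv ℂ H) p a b := by
    intro a b
    have hc := ((ContinuousLinearMap.apply ℂ ℂ b).hasFDerivAt.comp p hdf.hasFDerivAt)
    have : fderiv ℂ (fun q => fderiv ℂ H q b) p =
        (ContinuousLinearMap.apply ℂ ℂ b).comp (fderiv ℂ (fderiv ℂ H) p) := hc.fderiv
    show fderiv ℂ (fun q => fderiv ℂ H q b) p a = _
    rw [this]; rfl
  rw [key v w, key w v]
  exact hsymm.eq v w

lemma pd_itF_swap {F : EE → ℂ} (hF : ContDiffOn ℂ ⊤ F U) (v : EE) (m : ℕ) :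
    EqOn (pd v (itF m F)) (itF m (pd v F)) U := by
  induction m with
  | zero => rw [itF_zero, itF_zero]; exact fun p _ => rfl
  | succ m ih =>
    intro p hp
    calc pd v (itF (m + 1) F) p
        = pd v (pd (0, 0, 1) (itF m F)) p :=
          pd_congrU (fun q hq => itF_succ hF m hq) v hp
      _ = pd (0, 0, 1) (pd v (itF m F)) p := pd_comm (smooth_itF hF m) v _ hp
      _ = pd (0, 0, 1) (itF m (pd v F)) p := pd_congrU ih _ hp
      _ = itF (m + 1) (pd v F) p := (itF_succ (smooth_pd hF v) m hp).symm

lemma iteratedDeriv_eqOn {f g : ℂ → ℂ} {S : Set ℂ} (hS : IsOpen S) (h : EqOn f g S) (m : ℕ) :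
    EqOn (iteratedDeriv m f) (iteratedDeriv m g) S := by
  induction m with
  | zero => simpa [iteratedDeriv_zero] using h
  | succ m ih =>
    intro x hx
    rw [iteratedDeriv_succ, iteratedDeriv_succ]
    exact Filter.EventuallyEq.deriv_eq (Filter.eventuallyEq_of_mem (hS.mem_nhds hx) ih)

lemma itF_congr {F G : EE → ℂ} (h : EqOn F G U) (m : ℕ) : EqOn (itF m F) (itF m G) U := by
  intro p hp
  have hsl : EqOn (fun t => F (p.1, p.2.1, t)) (fun t => G (p.1, p.2.1, t)) {t : ℂ | t ≠ 0} :=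
    fun t ht => h (show ((p.1, p.2.1, t) : EE) ∈ U from ht)
  exact iteratedDeriv_eqOn isOpen_ne hsl m hp

lemma itF_const_mul {F : EE → ℂ} (hF : ContDiffOn ℂ ⊤ F U) (a : ℂ) (m : ℕ) :
    EqOn (itF m (fun q => a * F q)) (fun p => a * itF m F p) U := by
  induction m with
  | zero => intro p hp; simp [itF_zero]
  | succ m ih =>
    intro p hp
    have haF : ContDiffOn ℂ ⊤ (fun q => a * F q) U := contDiffOn_const.mul hF
    rw [itF_succ haF m hp]
    have h1 : pd (0, 0, 1) (itF m fun q => a * F q) p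
        = pd (0, 0, 1) (fun q => a * itF m F q) p := pd_congrU ih _ hp
    rw [h1]
    show fderiv ℂ (fun q => a * itF m F q) p (0, 0, 1) = _
    rw [fderiv_const_mul (diffAt (smooth_itF hF m) hp) a]
    show a • fderiv ℂ (itF m F) p (0, 0, 1) = a * itF (m + 1) F p
    rw [itF_succ hF m hp]
    rfl


section Phi

variable (k : ℝ)

noncomputable def Phi : EE → ℂ :=
  fun p => Complex.exp (Complex.I * (k / 2) * (p.2.2 * p.1 + p.2.1 / p.2.2))

lemma smooth_Phi : ContDiffOn ℂ ⊤ (Phi k) U := by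
  intro p hp
  apply ContDiffAt.contDiffWithinAt
  apply ContDiffAt.cexp
  apply ContDiffAt.mul contDiffAt_const
  exact ((contDiff_snd.snd.contDiffAt.mul contDiff_fst.contDiffAt).add
    (contDiff_snd.fst.contDiffAt.div contDiff_snd.snd.contDiffAt hp))

lemma pd1_Phi : EqOn (pd (1, 0, 0) (Phi k))
    (fun p => Complex.I * (k / 2) * p.2.2 * Phi k p) U := by
  intro p hp
  have hinner : HasDerivAt (fun s : ℂ => Complex.I * (k / 2) * (p.2.2 * s + p.2.1 / p.2.2))
      (Complex.I * (k / 2) * p.2.2) p.1 := by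
    have h0 : HasDerivAt (fun s : ℂ => p.2.2 * s + p.2.1 / p.2.2) p.2.2 p.1 := by
      simpa using (((hasDerivAt_id p.1).const_mul p.2.2).add_const (p.2.1 / p.2.2))
    simpa [mul_comm] using h0.const_mul (Complex.I * (k / 2))
  have h := hinner.cexp
  have hslice := hasDerivAt_slice1 (diffAt (smooth_Phi k) hp)
  have := h.unique hslice
  rw [← this]
  show Complex.exp (Complex.I * (k / 2) * (p.2.2 * p.1 + p.2.1 / p.2.2)) *
      (Complex.I * (k / 2) * p.2.2) = _
  unfold Phi; ring

lemma pd2_Phi : EqOn (pd (0, 1, 0) (Phi k))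
    (fun p => Complex.I * (k / 2) * p.2.2⁻¹ * Phi k p) U := by
  intro p hp
  have hinner : HasDerivAt (fun w : ℂ => Complex.I * (k / 2) * (p.2.2 * p.1 + w / p.2.2))
      (Complex.I * (k / 2) * p.2.2⁻¹) p.2.1 := by
    have h0 : HasDerivAt (fun w : ℂ => p.2.2 * p.1 + w / p.2.2) p.2.2⁻¹ p.2.1 := by
      simpa [div_eq_mul_inv] using (((hasDerivAt_id p.2.1).div_const p.2.2).const_add
        (p.2.2 * p.1))
    simpa [mul_comm] using h0.const_mul (Complex.I * (k / 2))
  have h := hinner.cexp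
  have hslice := hasDerivAt_slice2 (diffAt (smooth_Phi k) hp)
  have := h.unique hslice
  rw [← this]
  show Complex.exp (Complex.I * (k / 2) * (p.2.2 * p.1 + p.2.1 / p.2.2)) *
      (Complex.I * (k / 2) * p.2.2⁻¹) = _
  unfold Phi; ring

/-- mixed second partial of Phi -/
lemma pd21_Phi : EqOn (pd (0, 1, 0) (pd (1, 0, 0) (Phi k)))
    (fun p => (Complex.I * (k / 2)) ^ 2 * Phi k p) U := by
  intro p hp
  have hψ : ContDiffOn ℂ ⊤ (fun p => Complex.I * (k / 2) * p.2.2 * Phi k p) U :=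
    (contDiffOn_const.mul contDiff_snd.snd.contDiffOn).mul (smooth_Phi k)
  have h1 : pd (0, 1, 0) (pd (1, 0, 0) (Phi k)) p
      = pd (0, 1, 0) (fun p => Complex.I * (k / 2) * p.2.2 * Phi k p) p :=
    pd_congrU (pd1_Phi k) _ hp
  rw [h1]
  have hslice := hasDerivAt_slice2 (diffAt hψ hp)
  have hinner : HasDerivAt (fun w : ℂ => Complex.I * (k / 2) * (p.2.2 * p.1 + w / p.2.2))
      (Complex.I * (k / 2) * p.2.2⁻¹) p.2.1 := by
    have h0 : HasDerivAt (fun w : ℂ => p.2.2 * p.1 + w / p.2.2) p.2.2⁻¹ p.2.1 := by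
      simpa [div_eq_mul_inv] using (((hasDerivAt_id p.2.1).div_const p.2.2).const_add
        (p.2.2 * p.1))
    simpa [mul_comm] using h0.const_mul (Complex.I * (k / 2))
  have h := (hinner.cexp).const_mul (Complex.I * (k / 2) * p.2.2)
  have heq := h.unique hslice
  rw [← heq]
  have hl : p.2.2 ≠ 0 := hp
  show Complex.I * (k / 2) * p.2.2 *
      (Complex.exp (Complex.I * (k / 2) * (p.2.2 * p.1 + p.2.1 / p.2.2)) *
        (Complex.I * (k / 2) * p.2.2⁻¹)) = _
  unfold Phi
  field_simp

end Phi

section Main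

variable (k : ℝ) (m : ℕ)

/-- the key mixed-derivative identity for `V = itF m (Phi k)` -/
lemma mixed_V : ∀ p ∈ U, pd (0, 1, 0) (pd (1, 0, 0) (itF m (Phi k))) p
    = (Complex.I * (k / 2)) ^ 2 * itF m (Phi k) p := by
  intro p hp
  have h1 : pd (0, 1, 0) (pd (1, 0, 0) (itF m (Phi k))) p
      = pd (0, 1, 0) (itF m (pd (1, 0, 0) (Phi k))) p :=
    pd_congrU (pd_itF_swap (smooth_Phi k) _ m) _ hp
  rw [h1, pd_itF_swap (smooth_pd (smooth_Phi k) _) (0, 1, 0) m hp]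
  rw [itF_congr (pd21_Phi k) m hp]
  exact itF_const_mul (smooth_Phi k) _ m hp

lemma mixed_V' : ∀ p ∈ U, pd (1, 0, 0) (pd (0, 1, 0) (itF m (Phi k))) p
    = (Complex.I * (k / 2)) ^ 2 * itF m (Phi k) p := by
  intro p hp
  rw [pd_comm (smooth_itF (smooth_Phi k) m) _ _ hp]
  exact mixed_V k m p hp

end Main

section Real

variable (k : ℝ) (lam : ℂ)

/-- base point map -/
noncomputable def q (lam : ℂ) (x y : ℝ) : EE :=
  ((x : ℂ) + (y : ℂ) * Complex.I, (x : ℂ) - (y : ℂ) * Complex.I, lam)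

lemma q_mem (hlam : lam ≠ 0) (x y : ℝ) : q lam x y ∈ U := hlam

lemma hasDerivAt_ofReal' (x : ℝ) : HasDerivAt (fun t : ℝ => (t : ℂ)) 1 x := by
  simpa using (hasDerivAt_id x).ofReal_comp

lemma hasDerivAt_qx (y : ℝ) (x : ℝ) :
    HasDerivAt (fun t : ℝ => q lam t y) (((1 : ℂ), (1 : ℂ), (0 : ℂ)) : EE) x := by
  exact ((hasDerivAt_ofReal' x).add_const _).prodMk
    (((hasDerivAt_ofReal' x).sub_const _).prodMk (hasDerivAt_const _ _))

lemma hasDerivAt_qy (x : ℝ) (y : ℝ) :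
    HasDerivAt (fun t : ℝ => q lam x t) ((Complex.I, -Complex.I, (0 : ℂ)) : EE) y := by
  have h1 : HasDerivAt (fun t : ℝ => (x : ℂ) + (t : ℂ) * Complex.I) Complex.I y := by
    simpa using ((hasDerivAt_ofReal' y).mul_const Complex.I).const_add (x : ℂ)
  have h2 : HasDerivAt (fun t : ℝ => (x : ℂ) - (t : ℂ) * Complex.I) (-Complex.I) y := by
    simpa using ((hasDerivAt_ofReal' y).mul_const Complex.I).const_sub (x : ℂ)
  exact h1.prodMk (h2.prodMk (hasDerivAt_const _ _))

/-- chain rule for x-derivative of the real part -/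
lemma hasDerivAt_re_x (hlam : lam ≠ 0) {G : EE → ℂ} (hG : ContDiffOn ℂ ⊤ G U) (x y : ℝ) :
    HasDerivAt (fun t : ℝ => (G (q lam t y)).re)
      ((pd (1, 0, 0) G (q lam x y) + pd (0, 1, 0) G (q lam x y)).re) x := by
  have hd : DifferentiableAt ℂ G (q lam x y) := diffAt hG (q_mem lam hlam x y)
  have h1 := (hd.hasFDerivAt.restrictScalars ℝ).comp_hasDerivAt x (hasDerivAt_qx lam y x)
  have h2 := Complex.reCLM.hasFDerivAt.comp_hasDerivAt x h1
  have hv : ((fderiv ℂ G (q lam x y)).restrictScalars ℝ) ((1 : ℂ), (1 : ℂ), (0 : ℂ))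
      = pd (1, 0, 0) G (q lam x y) + pd (0, 1, 0) G (q lam x y) := by
    show fderiv ℂ G (q lam x y) ((1 : ℂ), (1 : ℂ), (0 : ℂ)) = _
    have : (((1 : ℂ), (1 : ℂ), (0 : ℂ)) : EE) = ((1 : ℂ), (0 : ℂ), (0 : ℂ)) + ((0 : ℂ), (1 : ℂ), (0 : ℂ)) := by
      simp [Prod.ext_iff]
    rw [this, map_add]; rfl
  simpa [hv, Function.comp_def] using h2

/-- chain rule for y-derivative of the real part -/
lemma hasDerivAt_re_y (hlam : lam ≠ 0) {G : EE → ℂ} (hG : ContDiffOn ℂ ⊤ G U) (x y : ℝ) :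
    HasDerivAt (fun t : ℝ => (G (q lam x t)).re)
      ((Complex.I * pd (1, 0, 0) G (q lam x y)
        - Complex.I * pd (0, 1, 0) G (q lam x y)).re) y := by
  have hd : DifferentiableAt ℂ G (q lam x y) := diffAt hG (q_mem lam hlam x y)
  have h1 := (hd.hasFDerivAt.restrictScalars ℝ).comp_hasDerivAt y (hasDerivAt_qy lam x y)
  have h2 := Complex.reCLM.hasFDerivAt.comp_hasDerivAt y h1
  have hv : ((fderiv ℂ G (q lam x y)).restrictScalars ℝ) ((Complex.I, -Complex.I, (0 : ℂ)) : EE)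
      = Complex.I * pd (1, 0, 0) G (q lam x y) - Complex.I * pd (0, 1, 0) G (q lam x y) := by
    show fderiv ℂ G (q lam x y) ((Complex.I, -Complex.I, (0 : ℂ)) : EE) = _
    have : ((Complex.I, -Complex.I, (0 : ℂ)) : EE)
        = Complex.I • (((1 : ℂ), (0 : ℂ), (0 : ℂ)) : EE)
          - Complex.I • (((0 : ℂ), (1 : ℂ), (0 : ℂ)) : EE) := by
      simp [Prod.ext_iff]
    rw [this, map_sub, map_smul, map_smul]
    show Complex.I * fderiv ℂ G (q lam x y) (1, 0, 0)
      - Complex.I * fderiv ℂ G (q lam x y) (0, 1, 0) = _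
    rfl
  simpa [hv, Function.comp_def] using h2

end Real
end HelmAux

open HelmAux in
theorem helmholtz_family (m : ℕ) (k : ℝ) (lam : ℂ) (hlam : lam ≠ 0) :
    ∀ x y : ℝ, -(lap (uFun m k lam) x y) = k ^ 2 * uFun m k lam x y := by
  intro x y
  set V : EE → ℂ := itF m (Phi k) with hVdef
  have hu : ∀ x' y' : ℝ, uFun m k lam x' y' = (V (q lam x' y')).re := fun _ _ => rfl
  have hVs : ContDiffOn ℂ ⊤ V U := smooth_itF (smooth_Phi k) m
  set V1 : EE → ℂ := fun p => pd (1, 0, 0) V p + pd (0, 1, 0) V p with hV1def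
  set V2 : EE → ℂ := fun p =>
    Complex.I * pd (1, 0, 0) V p - Complex.I * pd (0, 1, 0) V p with hV2def
  have hV1s : ContDiffOn ℂ ⊤ V1 U := (smooth_pd hVs _).add (smooth_pd hVs _)
  have hV2s : ContDiffOn ℂ ⊤ V2 U :=
    (contDiffOn_const.mul (smooth_pd hVs _)).sub (contDiffOn_const.mul (smooth_pd hVs _))
  have hpdx : pdx (uFun m k lam) = fun x' y' => (V1 (q lam x' y')).re := by
    funext x' y'
    show deriv (fun t => (V (q lam t y')).re) x' = _
    rw [(hasDerivAt_re_x lam hlam hVs x' y').deriv]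
  have hpdy : pdy (uFun m k lam) = fun x' y' => (V2 (q lam x' y')).re := by
    funext x' y'
    show deriv (fun t => (V (q lam x' t)).re) y' = _
    rw [(hasDerivAt_re_y lam hlam hVs x' y').deriv]
  set p : EE := q lam x y with hpdef
  have hp : p ∈ U := q_mem lam hlam x y
  have h2x : pdx (pdx (uFun m k lam)) x y = (pd (1, 0, 0) V1 p + pd (0, 1, 0) V1 p).re := by
    show deriv (fun t => pdx (uFun m k lam) t y) x = _
    rw [hpdx]
    exact (hasDerivAt_re_x lam hlam hV1s x y).deriv
  have h2y : pdy (pdy (uFun m k lam)) x y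
      = (Complex.I * pd (1, 0, 0) V2 p - Complex.I * pd (0, 1, 0) V2 p).re := by
    show deriv (fun t => pdy (uFun m k lam) x t) y = _
    rw [hpdy]
    exact (hasDerivAt_re_y lam hlam hV2s x y).deriv
  have hadd : ∀ v : EE, pd v V1 p = pd v (pd (1, 0, 0) V) p + pd v (pd (0, 1, 0) V) p := by
    intro v
    show fderiv ℂ (fun q => pd (1, 0, 0) V q + pd (0, 1, 0) V q) p v = _
    rw [fderiv_fun_add (diffAt (smooth_pd hVs _) hp) (diffAt (smooth_pd hVs _) hp)]
    rfl
  have hsub : ∀ v : EE, pd v V2 p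
      = Complex.I * pd v (pd (1, 0, 0) V) p - Complex.I * pd v (pd (0, 1, 0) V) p := by
    intro v
    show fderiv ℂ (fun q => Complex.I * pd (1, 0, 0) V q - Complex.I * pd (0, 1, 0) V q) p v = _
    rw [fderiv_fun_sub ((diffAt (smooth_pd hVs _) hp).const_mul _)
      ((diffAt (smooth_pd hVs _) hp).const_mul _)]
    rw [fderiv_const_mul (diffAt (smooth_pd hVs _) hp),
      fderiv_const_mul (diffAt (smooth_pd hVs _) hp)]
    rfl
  have hc : (Complex.I * ((k : ℂ) / 2)) ^ 2 = -((k : ℂ) ^ 2 / 4) := by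
    rw [mul_pow, Complex.I_sq]; ring
  have hB : pd (1, 0, 0) (pd (0, 1, 0) V) p = -((k : ℂ) ^ 2 / 4) * V p := by
    rw [mixed_V' k m p hp, hc]
  have hC : pd (0, 1, 0) (pd (1, 0, 0) V) p = -((k : ℂ) ^ 2 / 4) * V p := by
    rw [mixed_V k m p hp, hc]
  have hsum : (pd (1, 0, 0) V1 p + pd (0, 1, 0) V1 p)
      + (Complex.I * pd (1, 0, 0) V2 p - Complex.I * pd (0, 1, 0) V2 p)
      = -((k : ℂ) ^ 2) * V p := by
    rw [hadd, hadd, hsub, hsub, hB, hC]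
    set A := pd (1, 0, 0) (pd (1, 0, 0) V) p
    set D := pd (0, 1, 0) (pd (0, 1, 0) V) p
    linear_combination (A + D + (k : ℂ) ^ 2 / 2 * V p) * Complex.I_sq
  have hlap : lap (uFun m k lam) x y = (-((k : ℂ) ^ 2) * V p).re := by
    show pdx (pdx (uFun m k lam)) x y + pdy (pdy (uFun m k lam)) x y = _
    rw [h2x, h2y, ← Complex.add_re, hsum]
  rw [hlap, hu x y]
  have : (-((k : ℂ) ^ 2) * V p).re = -(k ^ 2 * (V p).re) := by
    simp [Complex.mul_re, ← Complex.ofReal_pow]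
  rw [this, neg_neg]
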